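/- arXiv:1511.04334 — 4 statements merged into one kernel-verified Lean document; each statement's English description precedes it below -/
import Mathlib

section
/- If V ~ N(-kI, kJ) with k, I, J > 0, then E[1 ∧ exp(V)] = Φ(-kI/√(kJ)) + exp(-kI + kJ/2)·Φ(-√(kJ) + kI/√(kJ)), where Φ is the standard normal CDF. -/
open MeasureTheory ProbabilityTheory Real
open scoped NNReal ENNReal

lemma aux_map (m σ : ℝ) :
    (gaussianReal 0 1).map (fun x => σ * x + m)
      = gaussianReal m (Real.toNNReal (σ ^ 2)) := by
  have h : (fun x : ℝ => σ * x + m) = (· + m) ∘ (σ * ·) := rfl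
  rw [h, ← Measure.map_map (measurable_add_const m) (measurable_const_mul σ),
    gaussianReal_map_const_mul, gaussianReal_map_add_const]
  congr 1
  · ring
  · ext
    simp [Real.coe_toNNReal _ (sq_nonneg σ)]

lemma aux_Iic (m σ : ℝ) (hσ : 0 < σ) (c : ℝ) :
    gaussianReal m (Real.toNNReal (σ ^ 2)) (Set.Iic c)
      = gaussianReal 0 1 (Set.Iic ((c - m) / σ)) := by
  rw [← aux_map m σ, Measure.map_apply (by fun_prop) measurableSet_Iic]
  congr 1
  ext x
  simp only [Set.mem_preimage, Set.mem_Iic]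
  rw [le_div_iff₀ hσ, mul_comm]
  constructor <;> intro <;> linarith

lemma aux_Ioi (m σ : ℝ) (hσ : 0 < σ) (c : ℝ) :
    gaussianReal m (Real.toNNReal (σ ^ 2)) (Set.Ioi c)
      = gaussianReal 0 1 (Set.Ioi ((c - m) / σ)) := by
  rw [← aux_map m σ, Measure.map_apply (by fun_prop) measurableSet_Ioi]
  congr 1
  ext x
  simp only [Set.mem_preimage, Set.mem_Ioi]
  rw [div_lt_iff₀ hσ, mul_comm]
  constructor <;> intro <;> linarith

lemma aux_sym (a : ℝ) :
    gaussianReal 0 1 (Set.Ioi a) = gaussianReal 0 1 (Set.Iic (-a)) := by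
  have hmap : (gaussianReal 0 1).map ((-1 : ℝ) * ·) = gaussianReal 0 1 := by
    have h2 : (⟨(-1:ℝ)^2, sq_nonneg _⟩ : ℝ≥0) * 1 = 1 := by
      ext; norm_num
    rw [gaussianReal_map_const_mul, mul_zero]
    congr 1
  have h1 : gaussianReal 0 1 (Set.Ioi a)
      = gaussianReal 0 1 (Set.Iio (-a)) := by
    conv_lhs => rw [← hmap]
    rw [Measure.map_apply (by fun_prop) measurableSet_Ioi]
    congr 1
    ext x
    simp only [Set.mem_preimage, Set.mem_Ioi, Set.mem_Iio]
    constructor <;> intro <;> linarith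
  have hs : gaussianReal 0 1 {(-a)} = 0 :=
    gaussianReal_absolutelyContinuous 0 one_ne_zero (volume_singleton)
  rw [h1]
  refine le_antisymm (measure_mono Set.Iio_subset_Iic_self) ?_
  rw [← Set.Iio_union_right (a := -a)]
  exact (measure_union_le _ _).trans (by rw [hs, add_zero])

lemma aux_int (m : ℝ) (v : ℝ≥0) (hv : v ≠ 0) (s : Set ℝ) :
    ∫ x in s, gaussianPDFReal m v x = (gaussianReal m v s).toReal := by
  rw [gaussianReal_apply_eq_integral m hv s,
    ENNReal.toReal_ofReal (integral_nonneg fun x => gaussianPDFReal_nonneg m v x)]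

lemma aux_Phi (Φ : ℝ → ℝ)
    (hΦ : ∀ x, Φ x = ∫ t in Set.Iic x, (Real.sqrt (2 * π))⁻¹ * Real.exp (-t ^ 2 / 2))
    (x : ℝ) : Φ x = (gaussianReal 0 1 (Set.Iic x)).toReal := by
  rw [hΦ, ← aux_int 0 1 one_ne_zero]
  congr 1
  ext t
  simp [gaussianPDFReal]

lemma aux_tilt (m s2 : ℝ) (hs2 : 0 < s2) (x : ℝ) :
    Real.exp x * gaussianPDFReal m (Real.toNNReal s2) x
      = Real.exp (m + s2 / 2) * gaussianPDFReal (m + s2) (Real.toNNReal s2) x := by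
  simp only [gaussianPDFReal, Real.coe_toNNReal _ hs2.le]
  rw [mul_left_comm, ← Real.exp_add, mul_left_comm, ← Real.exp_add]
  congr 1
  field_simp
  ring

/-- If V ~ N(-kI, kJ) with k, I, J > 0, then
E[1 ∧ exp(V)] = Φ(-kI/√(kJ)) + exp(-kI + kJ/2)·Φ(-√(kJ) + kI/√(kJ)). -/
theorem stmt_5 (k I J : ℝ) (hk : 0 < k) (hI : 0 < I) (hJ : 0 < J)
    (Φ : ℝ → ℝ)
    (hΦ : ∀ x, Φ x = ∫ t in Set.Iic x, (Real.sqrt (2 * π))⁻¹ * Real.exp (-t ^ 2 / 2)) :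
    (∫ v, min 1 (Real.exp v) ∂(gaussianReal (-(k * I)) (Real.toNNReal (k * J)))) =
      Φ (-(k * I) / Real.sqrt (k * J)) +
        Real.exp (-(k * I) + k * J / 2) * Φ (-Real.sqrt (k * J) + k * I / Real.sqrt (k * J)) := by
  have hkJ : 0 < k * J := mul_pos hk hJ
  set σ : ℝ := Real.sqrt (k * J) with hσdef
  have hσ : 0 < σ := Real.sqrt_pos.2 hkJ
  have hσ2 : σ ^ 2 = k * J := Real.sq_sqrt hkJ.le
  set m : ℝ := -(k * I) with hmdef
  set v : ℝ≥0 := Real.toNNReal (k * J) with hvdef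
  have hv : v ≠ 0 := by
    simp [hvdef, Real.toNNReal_eq_zero, not_le, hkJ]
  have hveq : v = Real.toNNReal (σ ^ 2) := by rw [hσ2]
  set p : ℝ → ℝ := gaussianPDFReal m v with hpdef
  -- Step 1: expectation as Lebesgue integral against density
  have h1 : (∫ x, min 1 (Real.exp x) ∂(gaussianReal m v))
      = ∫ x, p x * min 1 (Real.exp x) := by
    rw [gaussianReal_of_var_ne_zero _ hv]
    have hd : gaussianPDF m v = fun x => (((p x).toNNReal : ℝ≥0) : ℝ≥0∞) := by
      ext x
      simp [gaussianPDF, ENNReal.ofReal]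
      rfl
    rw [hd, integral_withDensity_eq_integral_smul
      (f := fun x => (p x).toNNReal)
      ((measurable_gaussianPDFReal m v).real_toNNReal)]
    congr 1
    ext x
    rw [NNReal.smul_def, smul_eq_mul,
      Real.coe_toNNReal _ (gaussianPDFReal_nonneg m v x)]
  -- integrability
  have hmeas : Measurable fun x => p x * min 1 (Real.exp x) :=
    (measurable_gaussianPDFReal m v).mul (measurable_const.min Real.measurable_exp)
  have hint : Integrable (fun x => p x * min 1 (Real.exp x)) := by
    refine (integrable_gaussianPDFReal m v).mono' hmeas.aestronglyMeasurable
      (ae_of_all _ fun x => ?_)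
    have h0 : 0 ≤ p x := gaussianPDFReal_nonneg m v x
    have h1' : 0 ≤ min 1 (Real.exp x) := le_min zero_le_one (Real.exp_nonneg x)
    have h2 : min 1 (Real.exp x) ≤ 1 := min_le_left _ _
    rw [Real.norm_eq_abs, abs_of_nonneg (mul_nonneg h0 h1')]
    nlinarith
  -- split the integral
  have hsplit : (∫ x, p x * min 1 (Real.exp x))
      = (∫ x in Set.Iic 0, p x * min 1 (Real.exp x))
        + ∫ x in Set.Ioi 0, p x * min 1 (Real.exp x) :=
    (intervalIntegral.integral_Iic_add_Ioi hint.integrableOn hint.integrableOn).symm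
  -- Ioi part
  have hIoi : (∫ x in Set.Ioi 0, p x * min 1 (Real.exp x))
      = Φ (m / σ) := by
    rw [setIntegral_congr_fun measurableSet_Ioi (g := p) (fun x hx => by
      rw [min_eq_left (Real.one_le_exp (le_of_lt hx)), mul_one]),
      hpdef, aux_int m v hv, hveq, aux_Ioi m σ hσ, aux_sym, aux_Phi Φ hΦ]
    congr 2
    rw [zero_sub, neg_div, neg_neg]
  -- Iic part
  have hIic : (∫ x in Set.Iic 0, p x * min 1 (Real.exp x))
      = Real.exp (m + k * J / 2) * Φ (-σ + k * I / σ) := by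
    have hcg : ∀ x ∈ Set.Iic (0:ℝ), p x * min 1 (Real.exp x)
        = Real.exp (m + k * J / 2) * gaussianPDFReal (m + k * J) v x := by
      intro x hx
      rw [min_eq_right (Real.exp_le_one_iff.2 hx), mul_comm, hpdef, hvdef,
        aux_tilt m (k * J) hkJ x]
    rw [setIntegral_congr_fun measurableSet_Iic hcg, integral_const_mul,
      aux_int (m + k * J) v hv, hveq, aux_Iic (m + k * J) σ hσ, aux_Phi Φ hΦ]
    have harg : (0 - (m + k * J)) / σ = -σ + k * I / σ := by
      rw [hmdef]
      field_simp
      nlinarith [hσ2]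
    rw [harg]
  rw [h1, hsplit, hIic, hIoi, hmdef]
  ring
end

section
/- If V ~ N(-m, 2m) for m > 0 (i.e. variance equal to twice the absolute value of the negative mean), then E[1 ∧ exp(V)] = 2Φ(-√(m/2)), where Φ is the standard normal CDF. -/
open MeasureTheory ProbabilityTheory Real
open Set in
open scoped NNReal ENNReal in
/-- If V ~ N(-m, 2m), m > 0, then E[1 ∧ exp(V)] = 2Φ(-√(m/2)). -/
theorem stmt_6 (m : ℝ) (hm : 0 < m)
    (Φ : ℝ → ℝ)
    (hΦ : ∀ x, Φ x = ∫ t in Set.Iic x, (Real.sqrt (2 * π))⁻¹ * Real.exp (-t ^ 2 / 2)) :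
    (∫ v, min 1 (Real.exp v) ∂(gaussianReal (-m) (Real.toNNReal (2 * m)))) =
      2 * Φ (-Real.sqrt (m / 2)) := by
  set σ2 : ℝ≥0 := (2*m).toNNReal with hσ2
  have hσ0 : σ2 ≠ 0 := by simp [hσ2, Real.toNNReal_eq_zero]; linarith
  have hcoe : (σ2 : ℝ) = 2 * m := Real.coe_toNNReal _ (by linarith)
  -- Step 1: integral against density
  have step1 : (∫ v, min 1 (Real.exp v) ∂(gaussianReal (-m) σ2)) =
      ∫ x, gaussianPDFReal (-m) σ2 x * min 1 (Real.exp x) := by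
    rw [gaussianReal_of_var_ne_zero _ hσ0]
    have h : gaussianPDF (-m) σ2
        = fun x => ((gaussianPDFReal (-m) σ2 x).toNNReal : ℝ≥0∞) := rfl
    rw [h, integral_withDensity_eq_integral_smul
        ((measurable_gaussianPDFReal _ _).real_toNNReal)]
    congr 1 with x
    rw [NNReal.smul_def, Real.coe_toNNReal _ (gaussianPDFReal_nonneg _ _ _), smul_eq_mul]
  -- pointwise identities
  have hkeyL : ∀ x ∈ Iic (0:ℝ),
      gaussianPDFReal (-m) σ2 x * min 1 (Real.exp x) = gaussianPDFReal m σ2 x := by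
    intro x hx
    simp only [mem_Iic] at hx
    rw [min_eq_right (Real.exp_le_one_iff.mpr hx)]
    unfold gaussianPDFReal
    rw [mul_assoc, ← Real.exp_add]
    congr 1
    rw [hcoe]
    field_simp
    ring
  have hkeyR : ∀ x ∈ Ioi (0:ℝ),
      gaussianPDFReal (-m) σ2 x * min 1 (Real.exp x) = gaussianPDFReal m σ2 (-x) := by
    intro x hx
    simp only [mem_Ioi] at hx
    rw [min_eq_left (Real.one_le_exp_iff.mpr hx.le)]
    unfold gaussianPDFReal
    rw [mul_one]
    congr 2
    ring
  have hpdfInt := integrable_gaussianPDFReal m σ2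
  have hnegInt : Integrable (fun x => gaussianPDFReal m σ2 (-x)) := hpdfInt.comp_neg
  -- integrability of integrand on the two halves
  have hIL : IntegrableOn (fun x => gaussianPDFReal (-m) σ2 x * min 1 (Real.exp x)) (Iic 0) :=
    (hpdfInt.integrableOn.congr_fun (fun x hx => (hkeyL x hx).symm) measurableSet_Iic)
  have hIR : IntegrableOn (fun x => gaussianPDFReal (-m) σ2 x * min 1 (Real.exp x)) (Ioi 0) :=
    (hnegInt.integrableOn.congr_fun (fun x hx => (hkeyR x hx).symm) measurableSet_Ioi)
  have split : (∫ x, gaussianPDFReal (-m) σ2 x * min 1 (Real.exp x)) =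
      (∫ x in Iic (0:ℝ), gaussianPDFReal m σ2 x) +
      (∫ x in Ioi (0:ℝ), gaussianPDFReal m σ2 (-x)) := by
    rw [← intervalIntegral.integral_Iic_add_Ioi hIL hIR,
      setIntegral_congr_fun measurableSet_Iic hkeyL,
      setIntegral_congr_fun measurableSet_Ioi hkeyR]
  have hflip : (∫ x in Ioi (0:ℝ), gaussianPDFReal m σ2 (-x)) =
      (∫ x in Iic (0:ℝ), gaussianPDFReal m σ2 x) := by
    rw [integral_comp_neg_Ioi]
    norm_num
  -- Step 3: the half-gaussian integral equals Φ(-√(m/2))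
  have hc : Real.sqrt (2*m) * Real.sqrt (m/2) = m := by
    rw [← Real.sqrt_mul (by linarith)]
    rw [show 2*m*(m/2) = m^2 by ring, Real.sqrt_sq hm.le]
  have hs2m : (0:ℝ) < Real.sqrt (2*m) := Real.sqrt_pos.mpr (by linarith)
  have hmap : (gaussianReal 0 1).map (fun x => Real.sqrt (2*m) * x + m) = gaussianReal m σ2 := by
    have h1 : (gaussianReal 0 1).map (fun x => Real.sqrt (2*m) * x) =
        gaussianReal 0 (⟨(Real.sqrt (2*m))^2, sq_nonneg _⟩ * 1) := by
      rw [gaussianReal_map_const_mul]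
      congr 1 <;> simp
    have h2 : (⟨(Real.sqrt (2*m))^2, sq_nonneg _⟩ * 1 : ℝ≥0) = σ2 := by
      ext
      show (Real.sqrt (2*m))^2 * 1 = (σ2:ℝ)
      rw [Real.sq_sqrt (by linarith), hcoe]
      ring
    rw [show (fun x => Real.sqrt (2*m) * x + m) = (fun x => x + m) ∘ (fun x => Real.sqrt (2*m) * x)
        from rfl, ← Measure.map_map (by fun_prop) (by fun_prop), h1, h2,
      gaussianReal_map_add_const]
    norm_num
  have hpre : (fun x => Real.sqrt (2*m) * x + m) ⁻¹' (Iic 0) = Iic (-Real.sqrt (m/2)) := by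
    ext x
    simp only [mem_preimage, mem_Iic]
    rw [← sub_nonneg]
    constructor
    · intro h
      nlinarith [hc]
    · intro h
      nlinarith [hc]
  have hhalf : (∫ x in Iic (0:ℝ), gaussianPDFReal m σ2 x) = Φ (-Real.sqrt (m/2)) := by
    have e1 : gaussianReal m σ2 (Iic 0) =
        ENNReal.ofReal (∫ x in Iic (0:ℝ), gaussianPDFReal m σ2 x) :=
      gaussianReal_apply_eq_integral m hσ0 _
    have e2 : gaussianReal m σ2 (Iic 0) =
        ENNReal.ofReal (∫ t in Iic (-Real.sqrt (m/2)), gaussianPDFReal 0 1 t) := by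
      rw [← hmap, Measure.map_apply (by fun_prop) measurableSet_Iic, hpre,
        gaussianReal_apply_eq_integral 0 one_ne_zero]
    have e3 : (∫ x in Iic (0:ℝ), gaussianPDFReal m σ2 x)
        = ∫ t in Iic (-Real.sqrt (m/2)), gaussianPDFReal 0 1 t := by
      have := e1.symm.trans e2
      rw [ENNReal.ofReal_eq_ofReal_iff
        (setIntegral_nonneg measurableSet_Iic fun x _ => gaussianPDFReal_nonneg _ _ _)
        (setIntegral_nonneg measurableSet_Iic fun x _ => gaussianPDFReal_nonneg _ _ _)] at this
      exact this
    rw [e3, hΦ]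
    apply setIntegral_congr_fun measurableSet_Iic
    intro t _
    unfold gaussianPDFReal
    norm_num
  rw [step1, split, hflip, hhalf]
  ring
end

section
/- Let ω : ℝ → ℝ≥0 with ω(x) = f(x)/q(x) for densities f, q, and suppose sup_x ω(x) = K < ∞. Then for any x with f(x) > 0 and any random variable Y with density q, the acceptance probability of the independence sampler from x satisfies E[1 ∧ (ω(Y)/ω(x))] ≥ (1/K)·E[ω(Y)·1{ω(Y) ≤ ω(x)}] + P(ω(Y) > ω(x)) > 0; in particular, since E[ω(Y)] = ∫ f(y) dy = 1, the single-site acceptance probability is bounded below by 1/K. -/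
open MeasureTheory Real

/-- With ω = f/q bounded by K, the acceptance probability from any x with
f(x) > 0 is at least (1/K)·E[ω(Y)1{ω(Y)≤ω(x)}] + P(ω(Y)>ω(x)) > 0, and is bounded
below by 1/K. -/
theorem stmt_7 (f q : ℝ → ℝ) (K : ℝ) (hK : 0 < K)
    (hf0 : ∀ x, 0 ≤ f x) (hq0 : ∀ x, 0 ≤ q x)
    (hf1 : ∫ x, f x = 1) (hq1 : ∫ x, q x = 1)
    (hac : ∀ x, 0 < f x → 0 < q x)
    (ω : ℝ → ℝ) (hω : ∀ x, ω x = f x / q x)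
    (hKbd : ∀ x, ω x ≤ K)
    (x : ℝ) (hx : 0 < f x) :
    (K⁻¹ * (∫ y in {y | ω y ≤ ω x}, q y * ω y) + ∫ y in {y | ω x < ω y}, q y)
        ≤ ∫ y, q y * min 1 (ω y / ω x) ∧
    0 < K⁻¹ * (∫ y in {y | ω y ≤ ω x}, q y * ω y) + ∫ y in {y | ω x < ω y}, q y ∧
    K⁻¹ ≤ ∫ y, q y * min 1 (ω y / ω x) := by
  -- basic facts
  have hqx : 0 < q x := hac x hx
  have hωx : 0 < ω x := by rw [hω]; exact div_pos hx hqx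
  have hqzf : ∀ y, q y = 0 → f y = 0 := by
    intro y hy
    by_contra h
    have := hac y (lt_of_le_of_ne (hf0 y) (Ne.symm h))
    simp [hy] at this
  have hqω : ∀ y, q y * ω y = f y := by
    intro y
    rcases eq_or_lt_of_le (hq0 y) with h | h
    · simp [← h, hqzf y h.symm]
    · rw [hω, mul_comm, div_mul_cancel₀ _ (ne_of_gt h)]
  have hω0 : ∀ y, 0 ≤ ω y := fun y => by rw [hω]; exact div_nonneg (hf0 y) (hq0 y)
  have hfKq : ∀ y, f y ≤ K * q y := by
    intro y
    rcases eq_or_lt_of_le (hq0 y) with h | h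
    · simp [hqzf y h.symm, ← h]
    · have := hKbd y
      rw [hω, div_le_iff₀ h] at this
      linarith [this]
  -- integrability
  have hfInt : Integrable f := by
    by_contra h; rw [integral_undef h] at hf1; exact one_ne_zero hf1.symm
  have hqInt : Integrable q := by
    by_contra h; rw [integral_undef h] at hq1; exact one_ne_zero hq1.symm
  have hamf : AEMeasurable f (volume : Measure ℝ) := hfInt.aemeasurable
  have hamq : AEMeasurable q (volume : Measure ℝ) := hqInt.aemeasurable
  have hamω : AEMeasurable ω (volume : Measure ℝ) := by
    have : ω = fun y => f y / q y := funext hω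
    rw [this]; exact hamf.div hamq
  set s : Set ℝ := {y | ω y ≤ ω x} with hs_def
  have hs : NullMeasurableSet s (volume : Measure ℝ) :=
    nullMeasurableSet_le hamω aemeasurable_const
  have hsc : {y | ω x < ω y} = sᶜ := by
    ext y; simp [hs_def, not_le]
  set g : ℝ → ℝ := fun y => q y * min 1 (ω y / ω x) with hg_def
  have hg_nonneg : ∀ y, 0 ≤ g y := fun y =>
    mul_nonneg (hq0 y) (le_min zero_le_one (div_nonneg (hω0 y) hωx.le))
  have hg_le_q : ∀ y, g y ≤ q y := fun y => by
    have : min 1 (ω y / ω x) ≤ 1 := min_le_left _ _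
    calc g y ≤ q y * 1 := mul_le_mul_of_nonneg_left this (hq0 y)
    _ = q y := mul_one _
  have hamg : AEMeasurable g (volume : Measure ℝ) :=
    hamq.mul ((aemeasurable_const.min (hamω.div aemeasurable_const)))
  have hgInt : Integrable g := by
    refine Integrable.mono hqInt hamg.aestronglyMeasurable ?_
    filter_upwards with y
    rw [Real.norm_eq_abs, Real.norm_eq_abs, abs_of_nonneg (hg_nonneg y), abs_of_nonneg (hq0 y)]
    exact hg_le_q y
  -- pointwise bound used everywhere: K⁻¹ * f ≤ g on s, g = q on sᶜ
  have hptg : ∀ y ∈ s, K⁻¹ * f y ≤ g y := by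
    intro y hy
    have hy' : ω y ≤ ω x := hy
    have h1 : ω y / ω x ≤ 1 := (div_le_one hωx).mpr hy'
    have : g y = q y * (ω y / ω x) := by
      simp [hg_def, min_eq_right h1]
    rw [this]
    have h2 : ω y / K ≤ ω y / ω x :=
      div_le_div_of_nonneg_left (hω0 y) hωx (hKbd x)
    calc K⁻¹ * f y = q y * (ω y / K) := by
          rw [← hqω y]; field_simp
    _ ≤ q y * (ω y / ω x) := mul_le_mul_of_nonneg_left h2 (hq0 y)
  have hptc : ∀ y ∈ sᶜ, g y = q y := by
    intro y hy
    have hy' : ω x < ω y := by simpa [hs_def, not_le] using hy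
    have h1 : (1 : ℝ) ≤ ω y / ω x := (one_le_div hωx).mpr hy'.le
    simp [hg_def, min_eq_left h1]
  -- set integrals
  have hsint : ∫ y in s, q y * ω y = ∫ y in s, f y := by
    apply integral_congr_ae
    filter_upwards with y using hqω y
  -- restrict integrability
  have hfIs := hfInt.restrict (s := s)
  have hfIsc := hfInt.restrict (s := sᶜ)
  have hqIsc := hqInt.restrict (s := sᶜ)
  have hgIs := hgInt.restrict (s := s)
  have hgIsc := hgInt.restrict (s := sᶜ)
  -- ∫_s K⁻¹ f ≤ ∫_s g
  have hIneq1 : K⁻¹ * ∫ y in s, f y ≤ ∫ y in s, g y := by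
    rw [← integral_const_mul]
    refine integral_mono_ae (hfIs.const_mul _) hgIs ?_
    exact (ae_restrict_iff'₀ hs).mpr (Filter.Eventually.of_forall hptg)
  -- ∫_{sᶜ} g = ∫_{sᶜ} q
  have hIeq2 : ∫ y in sᶜ, g y = ∫ y in sᶜ, q y := by
    exact integral_congr_ae
      ((ae_restrict_iff'₀ hs.compl).mpr (Filter.Eventually.of_forall hptc))
  -- ∫_{sᶜ} K⁻¹ f ≤ ∫_{sᶜ} q
  have hIneq3 : K⁻¹ * ∫ y in sᶜ, f y ≤ ∫ y in sᶜ, q y := by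
    rw [← integral_const_mul]
    refine integral_mono_ae (hfIsc.const_mul _) hqIsc ?_
    filter_upwards with y
    rw [inv_mul_le_iff₀ hK]
    exact hfKq y
  -- splitting
  have hsplitf : (∫ y in s, f y) + ∫ y in sᶜ, f y = 1 := by
    rw [integral_add_compl₀ hs hfInt, hf1]
  have hsplitg : (∫ y in s, g y) + ∫ y in sᶜ, g y = ∫ y, g y :=
    integral_add_compl₀ hs hgInt
  have hKinv : (0:ℝ) < K⁻¹ := inv_pos.mpr hK
  have main1 : K⁻¹ * (∫ y in s, q y * ω y) + ∫ y in sᶜ, q y ≤ ∫ y, g y := by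
    rw [hsint, ← hsplitg, ← hIeq2]
    exact add_le_add hIneq1 le_rfl
  have main2 : K⁻¹ ≤ K⁻¹ * (∫ y in s, q y * ω y) + ∫ y in sᶜ, q y := by
    rw [hsint]
    calc K⁻¹ = K⁻¹ * ((∫ y in s, f y) + ∫ y in sᶜ, f y) := by rw [hsplitf, mul_one]
    _ = K⁻¹ * (∫ y in s, f y) + K⁻¹ * ∫ y in sᶜ, f y := by ring
    _ ≤ K⁻¹ * (∫ y in s, f y) + ∫ y in sᶜ, q y := add_le_add le_rfl hIneq3
  rw [hsc]
  exact ⟨main1, lt_of_lt_of_le hKinv main2, le_trans main2 main1⟩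
end

section
/- Let f(x) = q(x)(1+ε(x)) as above with ∫ qε = 0 and |ε| ≤ c < 1, let g = log(f/q) = log(1+ε), X ~ f and Y ~ q independent. Then Var(g(Y) - g(X)) = 2∫ q(x)ε(x)² dx + R' with |R'| ≤ C'·∫ q(x)|ε(x)|³ dx for a constant C' depending only on c; in particular J := Var(g(Y) - g(X)) equals 2I up to third-order terms in ε. -/
open MeasureTheory Real

private lemma log_bd {c u : ℝ} (hc1 : c < 1) (hu : |u| ≤ c) :
    |Real.log (1 + u)| ≤ 1 / (1 - c) * |u| ∧
      |Real.log (1 + u) - u| ≤ 1 / (1 - c) * u ^ 2 := by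
  have hc0 : 0 ≤ c := le_trans (abs_nonneg u) hu
  have hcpos : 0 < 1 - c := by linarith
  have h1 : |(-u)| < 1 := by rw [abs_neg]; linarith [hu]
  have hupos : 0 < 1 - |u| := by rw [abs_neg] at h1; linarith
  have hcc : 1 - c ≤ 1 - |u| := by linarith
  have h0 := Real.abs_log_sub_add_sum_range_le h1 0
  have h2 := Real.abs_log_sub_add_sum_range_le h1 1
  simp [Finset.sum_range_one, Finset.sum_range_zero, sub_neg_eq_add, abs_neg] at h0 h2
  constructor
  · calc |Real.log (1 + u)| ≤ |u| / (1 - |u|) := by simpa using h0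
      _ ≤ |u| / (1 - c) := by gcongr
      _ = 1 / (1 - c) * |u| := by ring
  · have heq : Real.log (1 + u) - u = -u + Real.log (1 + u) := by ring
    calc |Real.log (1 + u) - u| = |(-u) + Real.log (1 + u)| := by rw [heq]
      _ ≤ |u| ^ 2 / (1 - |u|) := by simpa using h2
      _ ≤ |u| ^ 2 / (1 - c) := by gcongr
      _ = 1 / (1 - c) * u ^ 2 := by rw [sq_abs]; ring

private lemma integ_mul {q h : ℝ → ℝ} (hq : Integrable q) (hm : Measurable h)
    (C : ℝ) (hb : ∀ x, |h x| ≤ C) : Integrable (fun x => q x * h x) := by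
  have := hq.bdd_mul hm.aestronglyMeasurable (c := C) (Filter.Eventually.of_forall fun x => by simpa using hb x)
  simpa [mul_comm] using this

set_option maxHeartbeats 1000000 in
theorem stmt_16 (c : ℝ) (hc0 : 0 ≤ c) (hc1 : c < 1) :
    ∃ C' : ℝ, ∀ (q ε : ℝ → ℝ) (f g : ℝ → ℝ),
      (∀ x, 0 ≤ q x) → Integrable q → (∫ x, q x = 1) →
      Measurable ε → (∀ x, |ε x| ≤ c) → (∫ x, q x * ε x = 0) →
      (∀ x, f x = q x * (1 + ε x)) →
      (∀ x, g x = Real.log (1 + ε x)) →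
      |(((∫ x, q x * g x ^ 2) - (∫ x, q x * g x) ^ 2) +
          ((∫ x, f x * g x ^ 2) - (∫ x, f x * g x) ^ 2))
          - 2 * ∫ x, q x * ε x ^ 2|
        ≤ C' * ∫ x, q x * |ε x| ^ 3 := by
  have hcpos : 0 < 1 - c := by linarith
  set K : ℝ := 1 / (1 - c) with hKdef
  have hK1 : 1 ≤ K := by rw [hKdef, le_div_iff₀ hcpos]; linarith
  have hK0 : 0 < K := lt_of_lt_of_le one_pos hK1
  refine ⟨10 * K ^ 2, ?_⟩
  intro q ε f g hqnn hqi hq1 hεm hεc hqε hf hg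
  have hffun : f = fun x => q x * (1 + ε x) := funext hf
  have hgfun : g = fun x => Real.log (1 + ε x) := funext hg
  subst hffun hgfun
  set G : ℝ → ℝ := fun x => Real.log (1 + ε x) with hG
  -- pointwise bounds
  have hgb : ∀ x, |G x| ≤ K * |ε x| := fun x => (log_bd hc1 (hεc x)).1
  have hgs : ∀ x, |G x - ε x| ≤ K * ε x ^ 2 := fun x => (log_bd hc1 (hεc x)).2
  have hgc : ∀ x, |G x| ≤ K * c := fun x =>
    le_trans (hgb x) (by have := hεc x; nlinarith)
  -- measurability
  have hGm : Measurable G := Real.measurable_log.comp (measurable_const.add hεm)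
  -- integrability of all pieces
  have iG2 : Integrable (fun x => q x * G x ^ 2) :=
    integ_mul hqi (hGm.pow_const 2) ((K * c) ^ 2)
      (fun x => by rw [abs_pow]; exact pow_le_pow_left₀ (abs_nonneg _) (hgc x) 2)
  have ie2 : Integrable (fun x => q x * ε x ^ 2) :=
    integ_mul hqi (hεm.pow_const 2) (c ^ 2)
      (fun x => by rw [abs_pow]; exact pow_le_pow_left₀ (abs_nonneg _) (hεc x) 2)
  have iG : Integrable (fun x => q x * G x) :=
    integ_mul hqi hGm (K * c) hgc
  have ie : Integrable (fun x => q x * ε x) :=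
    integ_mul hqi hεm c hεc
  have ieG2 : Integrable (fun x => q x * (ε x * G x ^ 2)) :=
    integ_mul hqi (hεm.mul (hGm.pow_const 2)) (c * (K * c) ^ 2)
      (fun x => by
        rw [abs_mul, abs_pow]
        exact mul_le_mul (hεc x) (pow_le_pow_left₀ (abs_nonneg _) (hgc x) 2)
          (by positivity) hc0)
  have ieG : Integrable (fun x => q x * (ε x * G x)) :=
    integ_mul hqi (hεm.mul hGm) (c * (K * c))
      (fun x => by
        rw [abs_mul]
        exact mul_le_mul (hεc x) (hgc x) (abs_nonneg _) hc0)
  have iae3 : Integrable (fun x => q x * |ε x| ^ 3) :=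
    integ_mul hqi (hεm.abs.pow_const 3) (c ^ 3)
      (fun x => by
        rw [abs_pow, abs_abs]
        exact pow_le_pow_left₀ (abs_nonneg _) (hεc x) 3)
  have iae : Integrable (fun x => q x * |ε x|) :=
    integ_mul hqi hεm.abs c (fun x => by rw [abs_abs]; exact hεc x)
  -- abbreviations
  set T2 : ℝ := ∫ x, q x * ε x ^ 2 with hT2def
  set T3 : ℝ := ∫ x, q x * |ε x| ^ 3 with hT3def
  set T1 : ℝ := ∫ x, q x * |ε x| with hT1def
  set A : ℝ := ∫ x, q x * G x ^ 2 with hAdef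
  set B : ℝ := ∫ x, q x * G x with hBdef
  set E : ℝ := ∫ x, q x * (ε x * G x ^ 2) with hEdef
  set F : ℝ := ∫ x, q x * (ε x * G x) with hFdef
  have hT2nn : 0 ≤ T2 := integral_nonneg (fun x => mul_nonneg (hqnn x) (sq_nonneg _))
  have hT3nn : 0 ≤ T3 := integral_nonneg (fun x => mul_nonneg (hqnn x) (by positivity))
  have hT1nn : 0 ≤ T1 := integral_nonneg (fun x => mul_nonneg (hqnn x) (abs_nonneg _))
  -- generic bound: |∫ q * h| ≤ ∫ q * b  when |h| ≤ b pointwise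
  have key_bd : ∀ (h b : ℝ → ℝ), Integrable (fun x => q x * h x) →
      Integrable (fun x => q x * b x) → (∀ x, |h x| ≤ b x) →
      |∫ x, q x * h x| ≤ ∫ x, q x * b x := by
    intro h b ih ib hhb
    calc |∫ x, q x * h x| ≤ ∫ x, |q x * h x| := by
          simpa only [Real.norm_eq_abs] using
            norm_integral_le_integral_norm (μ := volume) (fun x => q x * h x)
      _ ≤ ∫ x, q x * b x := by
          refine integral_mono ih.abs ib (fun x => ?_)
          rw [abs_mul, abs_of_nonneg (hqnn x)]
          exact mul_le_mul_of_nonneg_left (hhb x) (hqnn x)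
  -- split integrals of f-parts
  have hfg2 : (∫ x, (fun x => q x * (1 + ε x)) x * G x ^ 2) = A + E := by
    have heq : (fun x => (q x * (1 + ε x)) * G x ^ 2)
        = fun x => q x * G x ^ 2 + q x * (ε x * G x ^ 2) := by funext x; ring
    simp only []
    rw [heq, integral_add iG2 ieG2]
  have hfg1 : (∫ x, (fun x => q x * (1 + ε x)) x * G x) = B + F := by
    have heq : (fun x => (q x * (1 + ε x)) * G x)
        = fun x => q x * G x + q x * (ε x * G x) := by funext x; ring
    simp only []
    rw [heq, integral_add iG ieG]
  -- D1 = A - T2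
  have iD1 : Integrable (fun x => q x * (G x ^ 2 - ε x ^ 2)) := by
    have heq : (fun x => q x * (G x ^ 2 - ε x ^ 2))
        = fun x => q x * G x ^ 2 - q x * ε x ^ 2 := by funext x; ring
    rw [heq]; exact iG2.sub ie2
  have hD1eq : (∫ x, q x * (G x ^ 2 - ε x ^ 2)) = A - T2 := by
    have heq : (fun x => q x * (G x ^ 2 - ε x ^ 2))
        = fun x => q x * G x ^ 2 - q x * ε x ^ 2 := by funext x; ring
    rw [heq, integral_sub iG2 ie2]
  -- B = ∫ q (G - ε)
  have iD2 : Integrable (fun x => q x * (G x - ε x)) := by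
    have heq : (fun x => q x * (G x - ε x))
        = fun x => q x * G x - q x * ε x := by funext x; ring
    rw [heq]; exact iG.sub ie
  have hBeq : B = ∫ x, q x * (G x - ε x) := by
    have heq : (fun x => q x * (G x - ε x))
        = fun x => q x * G x - q x * ε x := by funext x; ring
    rw [heq, integral_sub iG ie, hqε, sub_zero]
  -- bound helpers for constants * T3 / T2
  have i2K3 : Integrable (fun x => q x * (2 * K ^ 2 * |ε x| ^ 3)) := by
    have heq : (fun x => q x * (2 * K ^ 2 * |ε x| ^ 3))
        = fun x => 2 * K ^ 2 * (q x * |ε x| ^ 3) := by funext x; ring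
    rw [heq]; exact iae3.const_mul _
  have iK3 : Integrable (fun x => q x * (K ^ 2 * |ε x| ^ 3)) := by
    have heq : (fun x => q x * (K ^ 2 * |ε x| ^ 3))
        = fun x => K ^ 2 * (q x * |ε x| ^ 3) := by funext x; ring
    rw [heq]; exact iae3.const_mul _
  have iK2 : Integrable (fun x => q x * (K * ε x ^ 2)) := by
    have heq : (fun x => q x * (K * ε x ^ 2))
        = fun x => K * (q x * ε x ^ 2) := by funext x; ring
    rw [heq]; exact ie2.const_mul _
  have int_cmul : ∀ (r : ℝ) (h : ℝ → ℝ), (∫ x, q x * (r * h x)) = r * ∫ x, q x * h x := by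
    intro r h
    have heq : (fun x => q x * (r * h x)) = fun x => r * (q x * h x) := by funext x; ring
    rw [heq, integral_const_mul]
  -- bound b1 : |A - T2| ≤ 2K² T3
  have b1 : |A - T2| ≤ 2 * K ^ 2 * T3 := by
    rw [← hD1eq]
    calc |∫ x, q x * (G x ^ 2 - ε x ^ 2)| ≤ ∫ x, q x * (2 * K ^ 2 * |ε x| ^ 3) := by
          refine key_bd _ _ iD1 i2K3 (fun x => ?_)
          have h1 := hgs x
          have h2 := hgb x
          have h3 : |G x + ε x| ≤ (K + 1) * |ε x| :=
            le_trans (abs_add_le _ _) (by nlinarith [abs_nonneg (ε x)])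
          have h4 : G x ^ 2 - ε x ^ 2 = (G x - ε x) * (G x + ε x) := by ring
          rw [h4, abs_mul]
          have h5 : |G x - ε x| * |G x + ε x| ≤ (K * ε x ^ 2) * ((K + 1) * |ε x|) :=
            mul_le_mul h1 h3 (abs_nonneg _) (by positivity)
          refine le_trans h5 ?_
          have hsq : ε x ^ 2 = |ε x| ^ 2 := (sq_abs _).symm
          rw [hsq]
          have h6 : 0 ≤ K * (K - 1) * |ε x| ^ 3 :=
            mul_nonneg (mul_nonneg hK0.le (by linarith)) (pow_nonneg (abs_nonneg _) 3)
          nlinarith [pow_nonneg (abs_nonneg (ε x)) 3]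
      _ = 2 * K ^ 2 * T3 := by rw [int_cmul]
  -- bound b2 : |E| ≤ K² T3
  have b2 : |E| ≤ K ^ 2 * T3 := by
    calc |E| ≤ ∫ x, q x * (K ^ 2 * |ε x| ^ 3) := by
          refine key_bd _ _ ieG2 iK3 (fun x => ?_)
          have h2 := hgb x
          have hsq : |G x ^ 2| ≤ K ^ 2 * |ε x| ^ 2 := by
            rw [abs_pow]
            calc |G x| ^ 2 ≤ (K * |ε x|) ^ 2 := pow_le_pow_left₀ (abs_nonneg _) h2 2
              _ = K ^ 2 * |ε x| ^ 2 := by ring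
          rw [abs_mul]
          calc |ε x| * |G x ^ 2| ≤ |ε x| * (K ^ 2 * |ε x| ^ 2) :=
                mul_le_mul_of_nonneg_left hsq (abs_nonneg _)
            _ = K ^ 2 * |ε x| ^ 3 := by ring
      _ = K ^ 2 * T3 := by rw [int_cmul]
  -- bound b3 : |B| ≤ K T2
  have b3 : |B| ≤ K * T2 := by
    rw [hBeq]
    calc |∫ x, q x * (G x - ε x)| ≤ ∫ x, q x * (K * ε x ^ 2) :=
          key_bd _ _ iD2 iK2 (fun x => hgs x)
      _ = K * T2 := by rw [int_cmul]
  -- bound b4 : |F| ≤ K T2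
  have b4 : |F| ≤ K * T2 := by
    calc |F| ≤ ∫ x, q x * (K * ε x ^ 2) := by
          refine key_bd _ _ ieG iK2 (fun x => ?_)
          rw [abs_mul]
          calc |ε x| * |G x| ≤ |ε x| * (K * |ε x|) :=
                mul_le_mul_of_nonneg_left (hgb x) (abs_nonneg _)
            _ = K * ε x ^ 2 := by rw [← sq_abs]; ring
      _ = K * T2 := by rw [int_cmul]
  -- b5 : T2^2 ≤ T3
  have hT1le : T1 ≤ c := by
    calc T1 ≤ ∫ x, q x * c := by
          refine integral_mono iae (by simpa [mul_comm] using hqi.const_mul c) (fun x => ?_)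
          exact mul_le_mul_of_nonneg_left (hεc x) (hqnn x)
      _ = c := by rw [integral_mul_const, hq1, one_mul]
  have hT2T1 : T2 ≤ c * T1 := by
    calc T2 ≤ ∫ x, q x * (c * |ε x|) := by
          refine integral_mono ie2 (by
            have heq : (fun x => q x * (c * |ε x|)) = fun x => c * (q x * |ε x|) := by
              funext x; ring
            rw [heq]; exact iae.const_mul c) (fun x => ?_)
          refine mul_le_mul_of_nonneg_left ?_ (hqnn x)
          rw [← sq_abs]
          have := hεc x
          nlinarith [abs_nonneg (ε x)]
      _ = c * T1 := by rw [int_cmul]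
  have b5 : T2 ^ 2 ≤ T3 := by
    rcases eq_or_lt_of_le hT1nn with h0 | hT1pos
    · have hT20 : T2 = 0 := le_antisymm (by rw [← h0] at hT2T1; nlinarith) hT2nn
      rw [hT20]; simpa using hT3nn
    · -- key AM-GM with t = T2 / T1
      set t : ℝ := T2 / T1 with htdef
      have ht0 : 0 ≤ t := div_nonneg hT2nn hT1nn
      have key : 2 * t * T2 ≤ t ^ 2 * T1 + T3 := by
        have hpoint : ∀ x, 2 * t * (q x * ε x ^ 2)
            ≤ t ^ 2 * (q x * |ε x|) + q x * |ε x| ^ 3 := by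
          intro x
          have h1 : 0 ≤ q x * |ε x| := mul_nonneg (hqnn x) (abs_nonneg _)
          have h2 : q x * ε x ^ 2 = q x * |ε x| ^ 2 := by rw [sq_abs]
          rw [h2]
          nlinarith [mul_nonneg h1 (sq_nonneg (t - |ε x|))]
        calc 2 * t * T2 = ∫ x, 2 * t * (q x * ε x ^ 2) := by rw [integral_const_mul]
          _ ≤ ∫ x, (t ^ 2 * (q x * |ε x|) + q x * |ε x| ^ 3) := by
              refine integral_mono (ie2.const_mul _) ((iae.const_mul _).add iae3) hpoint
          _ = t ^ 2 * T1 + T3 := by rw [integral_add (iae.const_mul _) iae3, integral_const_mul]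
      have hT1T3 : T2 ^ 2 ≤ T1 * T3 := by
        have h1 : T1 ≠ 0 := ne_of_gt hT1pos
        have e1 : 2 * t * T2 = 2 * (T2 ^ 2 / T1) := by rw [htdef]; ring
        have e2 : t ^ 2 * T1 = T2 ^ 2 / T1 := by rw [htdef]; field_simp
        have h2 : T2 ^ 2 / T1 ≤ T3 := by rw [e1, e2] at key; linarith
        rw [div_le_iff₀ hT1pos] at h2
        nlinarith
      have hT1le1 : T1 ≤ 1 := le_trans hT1le (le_of_lt hc1)
      nlinarith [hT3nn]
  -- final assembly
  rw [hfg2, hfg1]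
  have hgoal : ((A - B ^ 2) + ((A + E) - (B + F) ^ 2)) - 2 * T2
      = 2 * (A - T2) + E - B ^ 2 - (B + F) ^ 2 := by ring
  rw [hgoal]
  have hB2 : B ^ 2 ≤ K ^ 2 * T3 := by
    have h1 : B ^ 2 ≤ (K * T2) ^ 2 := by
      rw [← sq_abs B]
      exact pow_le_pow_left₀ (abs_nonneg _) b3 2
    calc B ^ 2 ≤ (K * T2) ^ 2 := h1
      _ = K ^ 2 * T2 ^ 2 := by ring
      _ ≤ K ^ 2 * T3 := mul_le_mul_of_nonneg_left b5 (by positivity)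
  have hBF2 : (B + F) ^ 2 ≤ 4 * K ^ 2 * T3 := by
    have h0 : |B + F| ≤ 2 * K * T2 := le_trans (abs_add_le _ _) (by linarith)
    have h1 : (B + F) ^ 2 ≤ (2 * K * T2) ^ 2 := by
      rw [← sq_abs (B + F)]
      exact pow_le_pow_left₀ (abs_nonneg _) h0 2
    calc (B + F) ^ 2 ≤ (2 * K * T2) ^ 2 := h1
      _ = 4 * K ^ 2 * T2 ^ 2 := by ring
      _ ≤ 4 * K ^ 2 * T3 := mul_le_mul_of_nonneg_left b5 (by positivity)
  rw [abs_le] at b1 b2 ⊢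
  have hBF2nn : 0 ≤ (B + F) ^ 2 := sq_nonneg _
  have hB2nn : 0 ≤ B ^ 2 := sq_nonneg _
  constructor <;> nlinarith [hT3nn, sq_nonneg K]
end
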